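/- Let F⁻, F⁺, n̂ ∈ ℝⁿ with n̂ a unit vector, n̂ · F⁻ > 0 and n̂ · F⁺ > 0, and let w₁, …, w_{n−1} be an orthonormal basis of the orthogonal complement of n̂. Let A be the matrix with rows F⁺, w₁, …, w_{n−1} and B the matrix with rows F⁻, w₁, …, w_{n−1}. Let S = I + ((F⁺−F⁻) n̂ᵀ)/(n̂ · F⁻). Then A⁻¹ B = (S⁻¹)ᵀ. -/

import Mathlib

open Matrix

/-- The iPRC jump matrix `M = A⁻¹ B` equals the inverse transpose of the saltation
matrix `S = I + ((F⁺−F⁻) n̂ᵀ)/(n̂ ⬝ F⁻)`. -/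
theorem jump_matrix_eq_inv_transpose_saltation {n : ℕ}
    (Fm Fp nhat : Fin (n + 1) → ℝ) (w : Fin n → Fin (n + 1) → ℝ)
    (hunit : nhat ⬝ᵥ nhat = 1)
    (hm : nhat ⬝ᵥ Fm > 0) (hp : nhat ⬝ᵥ Fp > 0)
    (horth : ∀ i j, w i ⬝ᵥ w j = if i = j then 1 else 0)
    (hperp : ∀ i, w i ⬝ᵥ nhat = 0)
    (A B S : Matrix (Fin (n + 1)) (Fin (n + 1)) ℝ)
    (hA : A = Matrix.of (Matrix.vecCons Fp w))
    (hB : B = Matrix.of (Matrix.vecCons Fm w))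
    (hS : S = 1 + (nhat ⬝ᵥ Fm)⁻¹ • vecMulVec (Fp - Fm) nhat) :
    A⁻¹ * B = (S⁻¹)ᵀ := by
  have hn : nhat ⬝ᵥ Fm ≠ 0 := ne_of_gt hm
  have hrow0 : (Matrix.of (Matrix.vecCons Fm w)) 0 = Fm := rfl
  have hrows : ∀ i' : Fin n, (Matrix.of (Matrix.vecCons Fm w)) i'.succ = w i' :=
    fun _ => rfl
  -- Step 1: A = B * Sᵀ
  have hBS : A = B * Sᵀ := by
    subst hA hB hS
    ext i j
    have hScol : (fun k => ((1 : Matrix (Fin (n+1)) (Fin (n+1)) ℝ)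
        + (nhat ⬝ᵥ Fm)⁻¹ • vecMulVec (Fp - Fm) nhat)ᵀ k j)
        = Pi.single j 1 + ((nhat ⬝ᵥ Fm)⁻¹ * (Fp j - Fm j)) • nhat := by
      funext k
      simp [Matrix.one_apply, Matrix.vecMulVec_apply, Pi.single_apply, eq_comm]
      ring
    have : (Matrix.of (Matrix.vecCons Fm w) * ((1 : Matrix (Fin (n+1)) (Fin (n+1)) ℝ)
        + (nhat ⬝ᵥ Fm)⁻¹ • vecMulVec (Fp - Fm) nhat)ᵀ) i j
        = Matrix.of (Matrix.vecCons Fm w) i ⬝ᵥ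
          (Pi.single j 1 + ((nhat ⬝ᵥ Fm)⁻¹ * (Fp j - Fm j)) • nhat) := by
      rw [Matrix.mul_apply, ← hScol]; rfl
    rw [this, dotProduct_add, dotProduct_smul]
    refine Fin.cases ?_ ?_ i
    · simp [dotProduct_single, hrow0, dotProduct_comm Fm nhat]
      field_simp
      ring
    · intro i'
      simp [dotProduct_single, hrows, hperp]
  -- Step 2: B is invertible (explicit right inverse C)
  set c := (nhat ⬝ᵥ Fm)⁻¹ with hc
  have hBC : B * (Matrix.of fun k => Fin.cons (c * nhat k)
      (fun j => w j k - (Fm ⬝ᵥ w j) * c * nhat k)) = 1 := by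
    subst hB
    ext i l
    have hcol : ∀ l, (fun k => (Matrix.of fun k => Fin.cons (c * nhat k)
        (fun j => w j k - (Fm ⬝ᵥ w j) * c * nhat k) : Matrix _ _ ℝ) k l)
        = (Fin.cons (c • nhat) (fun j => w j - ((Fm ⬝ᵥ w j) * c) • nhat)
            : Fin (n+1) → Fin (n+1) → ℝ) l := by
      intro l
      refine Fin.cases ?_ ?_ l
      · funext k; simp
      · intro j; funext k; simp [mul_comm, mul_assoc, mul_left_comm]
    rw [Matrix.mul_apply]
    have : ∑ k, Matrix.of (Matrix.vecCons Fm w) i k *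
        (Matrix.of fun k => Fin.cons (c * nhat k)
          (fun j => w j k - (Fm ⬝ᵥ w j) * c * nhat k) : Matrix _ _ ℝ) k l
        = Matrix.of (Matrix.vecCons Fm w) i ⬝ᵥ
          (Fin.cons (c • nhat) (fun j => w j - ((Fm ⬝ᵥ w j) * c) • nhat)
            : Fin (n+1) → Fin (n+1) → ℝ) l := by
      rw [← hcol l]; rfl
    rw [this]
    refine Fin.cases ?_ ?_ i <;> [skip; intro i'] <;> refine Fin.cases ?_ ?_ l <;>
      [skip; intro j; skip; intro j]
    · simp [hrow0, dotProduct_smul, dotProduct_comm Fm nhat, hc, hn, Matrix.one_apply]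
    · simp [hrow0, dotProduct_sub, dotProduct_smul, dotProduct_comm Fm nhat,
        Matrix.one_apply, (Fin.succ_ne_zero j).symm, hc]
      field_simp
      ring
    · simp [hrows, dotProduct_smul, hperp, Matrix.one_apply, Fin.succ_ne_zero]
    · simp [hrows, dotProduct_sub, dotProduct_smul, hperp, horth, Matrix.one_apply,
        Fin.succ_inj]
  have hBdet : IsUnit B.det := Matrix.isUnit_det_of_right_inverse hBC
  -- Step 3: conclude
  rw [hBS, Matrix.mul_inv_rev, Matrix.mul_assoc, Matrix.nonsing_inv_mul B hBdet,
    Matrix.mul_one, Matrix.transpose_nonsing_inv]
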